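/- For n ≥ 2, d_N > 0, δ > 0, and x^{NE}, x* the solutions of ẋ = Σuᵢ^{NE} - δx and ẋ = Σuᵢ* - δx respectively with the same initial condition x(t₀) = x₀, one has x*(t) < x^{NE}(t) for all t ∈ (t₀, T]. -/

import Mathlib

open Finset in
/-- The cooperative pollution stock is strictly below the Nash stock on (t₀, T]. -/
theorem stmt10 (n : ℕ) (hn : 2 ≤ n) (b d : Fin n → ℝ) (δ t₀ T x₀ : ℝ) (hδ : 0 < δ)
    (dN : ℝ) (hdN : dN = ∑ i, d i) (hdNpos : 0 < dN)
    (xNE xstar : ℝ → ℝ)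
    (hxNE : ∀ t ∈ Set.Icc t₀ T, HasDerivAt xNE
      ((∑ i, (b i - d i / δ + d i / δ * Real.exp (δ * (t - T)))) - δ * xNE t) t)
    (hxNE0 : xNE t₀ = x₀)
    (hxs : ∀ t ∈ Set.Icc t₀ T, HasDerivAt xstar
      ((∑ i, (b i - dN / δ + dN / δ * Real.exp (δ * (t - T)))) - δ * xstar t) t)
    (hxs0 : xstar t₀ = x₀) :
    ∀ t ∈ Set.Ioc t₀ T, xstar t < xNE t := by
  set S : ℝ → ℝ := fun t => ((n : ℝ) - 1) * dN / δ * (1 - Real.exp (δ * (t - T))) with hS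
  have hkey : ∀ t : ℝ,
      (∑ i, (b i - d i / δ + d i / δ * Real.exp (δ * (t - T)))) -
        (∑ i, (b i - dN / δ + dN / δ * Real.exp (δ * (t - T)))) = S t := by
    intro t
    simp only [hS, Finset.sum_add_distrib, Finset.sum_sub_distrib, ← Finset.sum_div,
      ← Finset.sum_mul, Finset.sum_const, Finset.card_univ, Fintype.card_fin,
      nsmul_eq_mul, ← hdN]
    field_simp
    ring
  set g : ℝ → ℝ := fun t => xNE t - xstar t with hg
  set h : ℝ → ℝ := fun t => Real.exp (δ * t) * g t with hh
  have hgd : ∀ t ∈ Set.Icc t₀ T, HasDerivAt g (S t - δ * g t) t := by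
    intro t ht
    have := (hxNE t ht).sub (hxs t ht)
    refine this.congr_deriv ?_
    rw [← hkey t]; simp only [hg]; ring
  have hhd : ∀ t ∈ Set.Icc t₀ T, HasDerivAt h (Real.exp (δ * t) * S t) t := by
    intro t ht
    have hexp : HasDerivAt (fun s => Real.exp (δ * s)) (δ * Real.exp (δ * t)) t := by
      have := (Real.hasDerivAt_exp (δ * t)).comp t ((hasDerivAt_id t).const_mul δ)
      exact this.congr_deriv (by ring)
    have := hexp.mul (hgd t ht)
    refine this.congr_deriv ?_
    ring
  by_cases hT : t₀ ≤ T
  · have hcont : ContinuousOn h (Set.Icc t₀ T) := fun t ht =>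
      (hhd t ht).continuousAt.continuousWithinAt
    have hmono : StrictMonoOn h (Set.Icc t₀ T) := by
      apply strictMonoOn_of_deriv_pos (convex_Icc t₀ T) hcont
      intro t ht
      rw [interior_Icc] at ht
      rw [(hhd t ⟨le_of_lt ht.1, le_of_lt ht.2⟩).deriv]
      have he : Real.exp (δ * (t - T)) < 1 := by
        rw [← Real.exp_zero]
        exact Real.exp_lt_exp.2 (by nlinarith [ht.2])
      have hn1 : (0:ℝ) < (n : ℝ) - 1 := by
        have : (2:ℝ) ≤ (n:ℝ) := by exact_mod_cast hn
        linarith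
      have hSpos : 0 < S t := by
        apply mul_pos (div_pos (mul_pos hn1 hdNpos) hδ)
        linarith
      exact mul_pos (Real.exp_pos _) hSpos
    intro t ht
    have ht0 : t₀ ∈ Set.Icc t₀ T := ⟨le_refl _, hT⟩
    have htI : t ∈ Set.Icc t₀ T := ⟨le_of_lt ht.1, ht.2⟩
    have := hmono ht0 htI ht.1
    have hh0 : h t₀ = 0 := by simp [hh, hg, hxNE0, hxs0]
    rw [hh0] at this
    have hgt : 0 < g t := by
      have hep := Real.exp_pos (δ * t)
      have h2 : 0 < Real.exp (δ * t) * g t := this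
      nlinarith
    simp only [hg, sub_pos] at hgt
    exact hgt
  · intro t ht
    exact absurd (ht.1.trans_le ht.2).le hT
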